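/- If a ∈ (−∞, −π²/2), then v0(a) > 0, the real number v0(a) does not belong to Λ_a, and there exists a root λ0(a) ∈ Λ_a with Re(λ0(a)) = v0(a) and Im(λ0(a)) ≠ 0. -/

import Mathlib

open MeasureTheory Real

/-- The characteristic function `h_a(λ) = λ − a ∫_{−1}^0 e^{λu} du`. -/
noncomputable def charFn (a : ℝ) (lam : ℂ) : ℂ :=
  lam - a * ∫ u in (-1:ℝ)..0, Complex.exp (lam * u)

/-- The set `Λ_a` of complex solutions of the characteristic equation. -/
def charRoots (a : ℝ) : Set ℂ := {lam | charFn a lam = 0}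

/-- `v₀(a) = sup{Re λ : λ ∈ Λ_a}`. -/
noncomputable def v0 (a : ℝ) : ℝ := sSup (Complex.re '' charRoots a)


lemma charFn_zero_eq (a : ℝ) : charFn a 0 = -a := by
  simp [charFn]

lemma integral_exp_eq {lam : ℂ} (h : lam ≠ 0) :
    (∫ u in (-1:ℝ)..0, Complex.exp (lam * u)) = (1 - Complex.exp (-lam)) / lam := by
  rw [integral_exp_mul_complex h]
  push_cast
  rw [mul_zero, mul_neg_one, Complex.exp_zero]

lemma charFn_eq_zero_iff {a : ℝ} {lam : ℂ} (h : lam ≠ 0) :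
    charFn a lam = 0 ↔ lam ^ 2 = a * (1 - Complex.exp (-lam)) := by
  rw [charFn, integral_exp_eq h, sub_eq_zero]
  constructor
  · intro he
    field_simp at he
    rw [sq]; linear_combination he
  · intro he
    field_simp
    rw [sq] at he; linear_combination he


lemma pi_sq_gt_eight : (8:ℝ) < π ^ 2 := by
  nlinarith [Real.pi_gt_three]

lemma a_neg {a : ℝ} (ha : a < -(π ^ 2) / 2) : a < 0 := by
  nlinarith [Real.pi_gt_three]

lemma a_lt_neg_four {a : ℝ} (ha : a < -(π ^ 2) / 2) : a < -4 := by
  nlinarith [pi_sq_gt_eight]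

lemma real_no_root {a : ℝ} (ha : a < -(π ^ 2) / 2) {x : ℝ} (hx : x ≠ 0) :
    x ^ 2 ≠ a * (1 - Real.exp (-x)) := by
  rcases hx.lt_or_gt with hlt | hgt
  · -- x < 0 : LHS < RHS
    apply ne_of_lt
    have key : 1 - x + x ^ 2 / 4 ≤ Real.exp (-x) := by
      have h1 : 1 + (-x / 2) ≤ Real.exp (-x / 2) := by
        have := Real.add_one_le_exp (-x / 2); linarith
      have h0 : (0:ℝ) ≤ 1 + (-x / 2) := by linarith
      have := mul_self_le_mul_self h0 h1
      have hE : Real.exp (-x / 2) * Real.exp (-x / 2) = Real.exp (-x) := by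
        rw [← Real.exp_add]; ring_nf
      nlinarith [this, hE]
    have ha4 := a_lt_neg_four ha
    nlinarith [sq_nonneg x, mul_pos (neg_pos.mpr (a_neg ha)) (neg_pos.mpr hlt)]
  · -- x > 0 : RHS < 0 < LHS
    apply ne_of_gt
    have h1 : Real.exp (-x) < 1 := Real.exp_lt_one_iff.mpr (by linarith)
    have : a * (1 - Real.exp (-x)) < 0 :=
      mul_neg_of_neg_of_pos (a_neg ha) (by linarith)
    nlinarith


noncomputable def Phi (x : ℝ) : ℝ := min x 0 + 2 * max x 0 * Real.exp (max x 0)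

lemma Phi_continuous : Continuous Phi := by
  unfold Phi; fun_prop

lemma Phi_zero : Phi 0 = 0 := by simp [Phi]

lemma Phi_of_nonneg {x : ℝ} (hx : 0 ≤ x) : Phi x = 2 * x * Real.exp x := by
  simp [Phi, min_eq_right hx, max_eq_left hx]

lemma Phi_of_nonpos {x : ℝ} (hx : x ≤ 0) : Phi x = x := by
  simp [Phi, min_eq_left hx, max_eq_right hx]

lemma Phi_strictMono : StrictMono Phi := by
  intro x y hxy
  rcases le_or_gt y 0 with hy | hy
  · rw [Phi_of_nonpos hy, Phi_of_nonpos (hxy.le.trans hy)]; exact hxy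
  rcases le_or_gt x 0 with hx | hx
  · rw [Phi_of_nonpos hx, Phi_of_nonneg hy.le]
    have : 0 < 2 * y * Real.exp y := by positivity
    linarith
  · rw [Phi_of_nonneg hx.le, Phi_of_nonneg (hx.trans hxy).le]
    have h1 : Real.exp x < Real.exp y := Real.exp_lt_exp.mpr hxy
    nlinarith [Real.exp_pos x, Real.exp_pos y]

lemma Phi_surjective : Function.Surjective Phi := by
  apply Phi_continuous.surjective
  · apply Filter.tendsto_atTop_mono (g := Phi) (f := id) ?_ Filter.tendsto_id
    intro x
    rcases le_or_gt x 0 with hx | hx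
    · rw [Phi_of_nonpos hx]; exact le_rfl
    · rw [Phi_of_nonneg hx.le]
      simp only [id]
      nlinarith [mul_le_mul_of_nonneg_left (Real.one_le_exp hx.le) (by positivity : (0:ℝ) ≤ 2 * x)]
  · apply Filter.Tendsto.congr' _ Filter.tendsto_id
    filter_upwards [Filter.eventually_lt_atBot (0:ℝ)] with x hx
    exact (Phi_of_nonpos hx.le).symm

noncomputable def PhiIso : ℝ ≃o ℝ :=
  StrictMono.orderIsoOfSurjective Phi Phi_strictMono Phi_surjective

noncomputable def Psi : ℝ → ℝ := PhiIso.symm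

lemma Psi_continuous : Continuous Psi := PhiIso.symm.continuous

lemma Phi_Psi (y : ℝ) : Phi (Psi y) = y := PhiIso.apply_symm_apply y

lemma Psi_zero : Psi 0 = 0 := by
  have h : PhiIso 0 = 0 := Phi_zero
  have := PhiIso.symm_apply_apply 0
  rw [h] at this
  exact this

lemma Psi_pos {y : ℝ} (hy : 0 < y) : 0 < Psi y := by
  have := PhiIso.symm.strictMono hy
  rwa [show PhiIso.symm 0 = 0 from Psi_zero] at this


lemma exists_unstable_root {a : ℝ} (ha : a < -(π ^ 2) / 2) :
    ∃ lam : ℂ, charFn a lam = 0 ∧ 0 < lam.re ∧ lam.im ≠ 0 := by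
  set X : ℝ → ℝ := fun y => Psi (a * Real.sin y / y) with hXdef
  set g : ℝ → ℝ :=
    fun y => (X y) ^ 2 - y ^ 2 - a * (1 - Real.exp (-(X y)) * Real.cos y) with hgdef
  have hpi := Real.pi_pos
  have hg_cont : ContinuousOn g (Set.Icc π (2 * π)) := by
    have hq : ContinuousOn (fun y => a * Real.sin y / y) (Set.Icc π (2 * π)) := by
      apply ContinuousOn.div
      · exact (continuous_const.mul Real.continuous_sin).continuousOn
      · exact continuousOn_id
      · intro y hy; exact ne_of_gt (lt_of_lt_of_le hpi hy.1)
    have hX : ContinuousOn X (Set.Icc π (2 * π)) := Psi_continuous.comp_continuousOn hq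
    apply ContinuousOn.sub
    apply ContinuousOn.sub
    · exact hX.pow 2
    · exact (continuous_pow 2).continuousOn
    · exact continuousOn_const.mul
        (continuousOn_const.sub ((Real.continuous_exp.comp_continuousOn hX.neg).mul
          Real.continuous_cos.continuousOn))
  have hXpi : X π = 0 := by
    simp [hXdef, Real.sin_pi, Psi_zero]
  have hX2pi : X (2 * π) = 0 := by
    simp [hXdef, Real.sin_two_pi, Psi_zero]
  have hgpi : g π = -π ^ 2 - 2 * a := by
    simp [hgdef, hXpi, Real.cos_pi]; ring
  have hg2pi : g (2 * π) = -(2 * π) ^ 2 := by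
    simp [hgdef, hX2pi, Real.cos_two_pi]
  have h1 : 0 < g π := by rw [hgpi]; nlinarith
  have h2 : g (2 * π) < 0 := by rw [hg2pi]; nlinarith
  have hmem : (0:ℝ) ∈ Set.Icc (g (2 * π)) (g π) := ⟨h2.le, h1.le⟩
  obtain ⟨y, hyIcc, hgy⟩ :=
    intermediate_value_Icc' (by nlinarith : π ≤ 2 * π) hg_cont hmem
  have hy1 : π < y := by
    rcases lt_or_eq_of_le hyIcc.1 with h | h
    · exact h
    · exfalso; rw [← h] at hgy; linarith
  have hy2 : y < 2 * π := by
    rcases lt_or_eq_of_le hyIcc.2 with h | h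
    · exact h
    · exfalso; rw [h] at hgy; linarith
  have hy0 : 0 < y := lt_trans hpi hy1
  have hsin : Real.sin y < 0 := by
    rw [← Real.sin_sub_two_pi]
    exact Real.sin_neg_of_neg_of_neg_pi_lt (by linarith) (by linarith)
  have hqpos : 0 < a * Real.sin y / y :=
    div_pos (mul_pos_of_neg_of_neg (a_neg ha) hsin) hy0
  have hX0 : 0 < X y := Psi_pos hqpos
  have hPhi' : 2 * X y * Real.exp (X y) = a * Real.sin y / y := by
    rw [hXdef]; simp only
    rw [← Phi_of_nonneg (le_of_lt (Psi_pos hqpos)), Phi_Psi]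
  have himag : 2 * X y * y = a * Real.exp (-(X y)) * Real.sin y := by
    have hE := Real.exp_pos (X y)
    rw [Real.exp_neg]
    rw [eq_div_iff (ne_of_gt hy0)] at hPhi'
    field_simp
    nlinarith [hPhi']
  have hreal : (X y) ^ 2 - y ^ 2 = a * (1 - Real.exp (-(X y)) * Real.cos y) := by
    have : g y = 0 := hgy
    rw [hgdef] at this; simp only at this; linarith
  refine ⟨⟨X y, y⟩, ?_, hX0, ne_of_gt hy0⟩
  have hne : (⟨X y, y⟩ : ℂ) ≠ 0 := by
    intro h
    have := congrArg Complex.im h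
    simp at this
    exact (ne_of_gt hy0) this
  rw [charFn_eq_zero_iff hne]
  have hexp_re : (Complex.exp (-(⟨X y, y⟩ : ℂ))).re = Real.exp (-(X y)) * Real.cos y := by
    rw [Complex.exp_re]
    simp [Real.cos_neg]
  have hexp_im : (Complex.exp (-(⟨X y, y⟩ : ℂ))).im = -(Real.exp (-(X y)) * Real.sin y) := by
    rw [Complex.exp_im]
    simp [Real.sin_neg]
  apply Complex.ext
  · rw [sq]
    simp [Complex.mul_re, hexp_re]
    linarith [hreal]
  · rw [sq]
    simp [Complex.mul_im, hexp_im]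
    linarith [himag]


lemma root_abs_le {a : ℝ} {lam : ℂ} (h : charFn a lam = 0) (hre : 0 ≤ lam.re) :
    ‖lam‖ ≤ |a| := by
  have hI : ‖∫ u in (-1:ℝ)..0, Complex.exp (lam * u)‖ ≤ 1 := by
    have hb : ∀ u ∈ Set.uIoc (-1:ℝ) 0, ‖Complex.exp (lam * u)‖ ≤ 1 := by
      intro u hu
      rw [Set.uIoc_of_le (by norm_num : (-1:ℝ) ≤ 0)] at hu
      rw [Complex.norm_exp]
      apply Real.exp_le_one_iff.mpr
      have : (lam * (u:ℂ)).re = lam.re * u := by simp [Complex.mul_re]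
      rw [this]
      exact mul_nonpos_of_nonneg_of_nonpos hre hu.2
    calc ‖∫ u in (-1:ℝ)..0, Complex.exp (lam * u)‖ ≤ 1 * |(0:ℝ) - (-1)| :=
          intervalIntegral.norm_integral_le_of_norm_le_const hb
      _ = 1 := by norm_num
  have hlam : lam = a * ∫ u in (-1:ℝ)..0, Complex.exp (lam * u) := by
    have := h; rw [charFn, sub_eq_zero] at this; exact this
  calc ‖lam‖ = ‖(a:ℂ)‖ * ‖∫ u in (-1:ℝ)..0, Complex.exp (lam * u)‖ := by
        rw [← norm_mul, ← hlam]
    _ ≤ |a| * 1 := by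
        rw [Complex.norm_real, Real.norm_eq_abs]
        exact mul_le_mul_of_nonneg_left hI (abs_nonneg a)
    _ = |a| := by rw [mul_one]

/-- If `a < −π²/2` then `v₀(a) > 0`, the real number `v₀(a)` is not a root, and there
is a genuinely complex root `λ₀(a)` with real part `v₀(a)`. -/
theorem charRoots_below_critical (a : ℝ) (ha : a < -(π ^ 2) / 2) :
    0 < v0 a ∧
    ((v0 a : ℂ) ∉ charRoots a) ∧
    ∃ lam0 ∈ charRoots a, lam0.re = v0 a ∧ lam0.im ≠ 0 := by
  have hnoreal : ∀ x : ℝ, (x:ℂ) ∉ charRoots a := by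
    intro x hx
    rw [charRoots, Set.mem_setOf_eq] at hx
    rcases eq_or_ne x 0 with rfl | hx0
    · rw [Complex.ofReal_zero, charFn_zero_eq] at hx
      have : a = 0 := by exact_mod_cast neg_eq_zero.mp hx
      linarith [a_neg ha]
    · have hne : ((x:ℂ)) ≠ 0 := Complex.ofReal_ne_zero.mpr hx0
      rw [charFn_eq_zero_iff hne] at hx
      rw [← Complex.ofReal_neg, ← Complex.ofReal_exp] at hx
      have : x ^ 2 = a * (1 - Real.exp (-x)) := by exact_mod_cast hx
      exact real_no_root ha hx0 this
  obtain ⟨r, hr, hr_re, _⟩ := exists_unstable_root ha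
  set S : Set ℂ :=
    {z | z ^ 2 = (a:ℂ) * (1 - Complex.exp (-z)) ∧ r.re ≤ z.re ∧ ‖z‖ ≤ |a|} with hSdef
  have hSc : IsClosed S := by
    have h1 : IsClosed {z : ℂ | z ^ 2 = (a:ℂ) * (1 - Complex.exp (-z))} :=
      isClosed_eq (by fun_prop) (by fun_prop)
    have h2 : IsClosed {z : ℂ | r.re ≤ z.re} := isClosed_le continuous_const Complex.continuous_re
    have h3 : IsClosed {z : ℂ | ‖z‖ ≤ |a|} :=
      isClosed_le continuous_norm continuous_const
    rw [hSdef, Set.setOf_and, Set.setOf_and]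
    exact h1.inter (h2.inter h3)
  have hScompact : IsCompact S := by
    apply (isCompact_closedBall (0:ℂ) |a|).of_isClosed_subset hSc
    intro z hz
    rw [Metric.mem_closedBall, dist_zero_right]
    exact hz.2.2
  have hrne : r ≠ 0 := by
    intro h0; rw [h0] at hr_re; simp at hr_re
  have hrS : r ∈ S :=
    ⟨(charFn_eq_zero_iff hrne).mp hr, le_rfl, root_abs_le hr hr_re.le⟩
  obtain ⟨l0, hl0S, hmax⟩ :=
    hScompact.exists_isMaxOn ⟨r, hrS⟩ Complex.continuous_re.continuousOn
  have hl0_re : r.re ≤ l0.re := hl0S.2.1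
  have hl0_pos : 0 < l0.re := lt_of_lt_of_le hr_re hl0_re
  have hl0ne : l0 ≠ 0 := by
    intro h0; rw [h0] at hl0_pos; simp at hl0_pos
  have hl0root : l0 ∈ charRoots a := (charFn_eq_zero_iff hl0ne).mpr hl0S.1
  have hub : ∀ z ∈ charRoots a, z.re ≤ l0.re := by
    intro z hz
    rcases lt_or_ge z.re r.re with h | h
    · linarith
    · have hzne : z ≠ 0 := by
        intro h0; rw [h0] at h; simp at h; linarith
      have hzeq := (charFn_eq_zero_iff hzne).mp hz
      have hzabs := root_abs_le hz (le_trans hr_re.le h)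
      exact (isMaxOn_iff.mp hmax) z ⟨hzeq, h, hzabs⟩
  have hgreat : IsGreatest (Complex.re '' charRoots a) l0.re :=
    ⟨⟨l0, hl0root, rfl⟩, by rintro _ ⟨z, hz, rfl⟩; exact hub z hz⟩
  have hv0 : v0 a = l0.re := hgreat.csSup_eq
  refine ⟨by rw [hv0]; exact hl0_pos, hnoreal _, l0, hl0root, hv0.symm, ?_⟩
  intro him
  have hl0eq : l0 = ((l0.re : ℝ) : ℂ) := Complex.ext (by simp) (by simp [him])
  exact hnoreal l0.re (hl0eq ▸ hl0root)
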